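/- (Expectation form of Corollary 1.) Let (Ω, ℱ, ℙ) be a probability space, Π₀ a 2×2 real positive definite matrix, W > 0, T ≥ 1, and let z₀, …, z_{T−1} : Ω → ℝ² be random vectors. Define pathwise Π_{t+1}(ω) := Π_t(ω) − (Π_t(ω) z_t(ω) z_t(ω)ᵀ Π_t(ω))/(W + z_t(ω)ᵀ Π_t(ω) z_t(ω)), with Π₀ constant. Assume each z_tᵀ Π_t z_t and log det Π_T are integrable and everything is measurable. Then E[(1/2)·log det Π₀ − (1/2)·log det Π_T] ≤ T·(1/2)·log(1 + (1/(T·W))·Σ_{t=0}^{T−1} E[z_tᵀ Π_t z_t]). -/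

import Mathlib

open MeasureTheory Matrix

/-- Matrices inherit the product measurable structure (defeq to `Fin 2 → Fin 2 → ℝ`). -/
instance : MeasurableSpace (Matrix (Fin 2) (Fin 2) ℝ) :=
  (inferInstance : MeasurableSpace (Fin 2 → Fin 2 → ℝ))

/-- The LSE covariance update map Φ(Π, z) = Π − (Π z zᵀ Π)/(W + zᵀ Π z). -/
noncomputable def covUpdate (W : ℝ) (Pm : Matrix (Fin 2) (Fin 2) ℝ) (z : Fin 2 → ℝ) :
    Matrix (Fin 2) (Fin 2) ℝ :=
  Pm - (W + z ⬝ᵥ Pm.mulVec z)⁻¹ • (Pm * vecMulVec z z * Pm)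

lemma vecMulVec_posSemidef' (z : Fin 2 → ℝ) : (vecMulVec z z).PosSemidef := by
  rw [posSemidef_iff_dotProduct_mulVec]
  constructor
  · ext i j; simp [vecMulVec_apply, IsHermitian, conjTranspose_apply, mul_comm]
  · intro x
    have h : (star x) ⬝ᵥ (vecMulVec z z).mulVec x = (z ⬝ᵥ x) * (z ⬝ᵥ x) := by
      simp [dotProduct, mulVec, vecMulVec_apply, Fin.sum_univ_two]; ring
    rw [h]; exact mul_self_nonneg _

lemma posSemidef_smul' {M : Matrix (Fin 2) (Fin 2) ℝ} (hM : M.PosSemidef) {c : ℝ} (hc : 0 ≤ c) :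
    (c • M).PosSemidef := by
  refine posSemidef_iff_dotProduct_mulVec.mpr ⟨?_, fun x => ?_⟩
  · show (c • M)ᴴ = c • M
    rw [conjTranspose_smul, hM.1.eq, star_trivial]
  · rw [smul_mulVec, dotProduct_smul]
    exact mul_nonneg hc (hM.dotProduct_mulVec_nonneg x)

lemma quad_nonneg' {Pm : Matrix (Fin 2) (Fin 2) ℝ} (hPm : Pm.PosDef) (z : Fin 2 → ℝ) :
    0 ≤ z ⬝ᵥ Pm.mulVec z := by simpa using hPm.posSemidef.dotProduct_mulVec_nonneg z

lemma ZPmZ (Pm : Matrix (Fin 2) (Fin 2) ℝ) (z : Fin 2 → ℝ) :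
    vecMulVec z z * Pm * vecMulVec z z = (z ⬝ᵥ Pm.mulVec z) • vecMulVec z z := by
  ext i j
  simp [mul_apply, vecMulVec_apply, mulVec, dotProduct, Fin.sum_univ_two]
  ring

lemma covUpdate_mul (W : ℝ) (hW : 0 < W) {Pm : Matrix (Fin 2) (Fin 2) ℝ} (hPm : Pm.PosDef)
    (z : Fin 2 → ℝ) :
    covUpdate W Pm z * (Pm⁻¹ + W⁻¹ • vecMulVec z z) = 1 := by
  set q := z ⬝ᵥ Pm.mulVec z with hq
  have hq0 : 0 ≤ q := quad_nonneg' hPm z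
  have hc : W + q ≠ 0 := by positivity
  have hPmInv : Pm * Pm⁻¹ = 1 := Pm.mul_nonsing_inv (isUnit_iff_ne_zero.2 hPm.det_pos.ne')
  set Z := vecMulVec z z with hZ
  have h1 : Pm * Z * Pm * Pm⁻¹ = Pm * Z := by
    rw [Matrix.mul_assoc (Pm * Z), hPmInv, Matrix.mul_one]
  have h2 : Pm * Z * Pm * Z = q • (Pm * Z) := by
    rw [Matrix.mul_assoc Pm Z Pm, Matrix.mul_assoc, ZPmZ, ← hq, ← hZ, Matrix.mul_smul]
  have hcU : (W + q) • covUpdate W Pm z = (W + q) • Pm - Pm * Z * Pm := by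
    rw [covUpdate, ← hq, ← hZ, smul_sub, smul_inv_smul₀ hc]
  have hWB : W • (Pm⁻¹ + W⁻¹ • Z) = W • Pm⁻¹ + Z := by
    rw [smul_add, smul_smul, mul_inv_cancel₀ hW.ne', one_smul]
  have key : ((W + q) * W) • (covUpdate W Pm z * (Pm⁻¹ + W⁻¹ • Z)) =
      ((W + q) * W) • (1 : Matrix (Fin 2) (Fin 2) ℝ) := by
    calc ((W + q) * W) • (covUpdate W Pm z * (Pm⁻¹ + W⁻¹ • Z))
        = ((W + q) • covUpdate W Pm z) * (W • (Pm⁻¹ + W⁻¹ • Z)) := by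
          rw [Matrix.smul_mul, Matrix.mul_smul, smul_smul]
      _ = ((W + q) • Pm - Pm * Z * Pm) * (W • Pm⁻¹ + Z) := by rw [hcU, hWB]
      _ = ((W + q) * W) • (1 : Matrix (Fin 2) (Fin 2) ℝ) := by
          simp only [Matrix.sub_mul, Matrix.mul_add, Matrix.smul_mul, Matrix.mul_smul,
            smul_smul, h1, h2, hPmInv]
          module
  exact smul_right_injective (Matrix (Fin 2) (Fin 2) ℝ) (mul_ne_zero hc hW.ne') key

lemma covUpdate_posDef (W : ℝ) (hW : 0 < W) {Pm : Matrix (Fin 2) (Fin 2) ℝ} (hPm : Pm.PosDef)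
    (z : Fin 2 → ℝ) : (covUpdate W Pm z).PosDef := by
  have hB : (Pm⁻¹ + W⁻¹ • vecMulVec z z).PosDef :=
    hPm.inv.add_posSemidef (posSemidef_smul' (vecMulVec_posSemidef' z) (by positivity))
  have h2 : (Pm⁻¹ + W⁻¹ • vecMulVec z z)⁻¹ = covUpdate W Pm z :=
    Matrix.inv_eq_right_inv (mul_eq_one_comm.1 (covUpdate_mul W hW hPm z))
  rw [← h2]; exact hB.inv

lemma det_aux (Pm : Matrix (Fin 2) (Fin 2) ℝ) (z : Fin 2 → ℝ) (c : ℝ) :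
    (c • Pm - Pm * vecMulVec z z * Pm).det = Pm.det * c * (c - z ⬝ᵥ Pm.mulVec z) := by
  simp only [det_fin_two, Matrix.sub_apply, Matrix.smul_apply, smul_eq_mul,
    mul_apply, vecMulVec_apply, mulVec, dotProduct, Fin.sum_univ_two]
  ring

lemma covUpdate_det (W : ℝ) (Pm : Matrix (Fin 2) (Fin 2) ℝ) (z : Fin 2 → ℝ)
    (hc : W + z ⬝ᵥ Pm.mulVec z ≠ 0) :
    (covUpdate W Pm z).det = Pm.det * W / (W + z ⬝ᵥ Pm.mulVec z) := by
  set c := W + z ⬝ᵥ Pm.mulVec z with hcdef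
  have h1 : c • covUpdate W Pm z = c • Pm - Pm * vecMulVec z z * Pm := by
    rw [covUpdate, smul_sub, smul_inv_smul₀ hc]
  have h2 := congrArg Matrix.det h1
  rw [det_smul, det_aux, Fintype.card_fin] at h2
  have h3 : (covUpdate W Pm z).det = Pm.det * c * (c - z ⬝ᵥ Pm.mulVec z) / c ^ 2 := by
    field_simp at h2 ⊢; linarith [h2]
  rw [h3]
  have h4 : c - z ⬝ᵥ Pm.mulVec z = W := by rw [hcdef]; ring
  rw [h4]
  field_simp

lemma log_tangent {W m x : ℝ} (hW : 0 < W) (hm : 0 ≤ m) (hx : 0 ≤ x) :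
    Real.log (1 + x / W) ≤ Real.log (1 + m / W) + (x - m) / (W + m) := by
  have hWm : 0 < W + m := by linarith
  have hWx : 0 < W + x := by linarith
  have e1 : (1 : ℝ) + x / W = (W + x) / W := by field_simp
  have e2 : (1 : ℝ) + m / W = (W + m) / W := by field_simp
  have h1 : Real.log (1 + x / W) - Real.log (1 + m / W) = Real.log ((W + x) / (W + m)) := by
    rw [e1, e2, Real.log_div hWx.ne' hW.ne', Real.log_div hWm.ne' hW.ne',
      Real.log_div hWx.ne' hWm.ne']
    ring
  have h2 : Real.log ((W + x) / (W + m)) ≤ (W + x) / (W + m) - 1 :=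
    Real.log_le_sub_one_of_pos (by positivity)
  have h3 : (W + x) / (W + m) - 1 = (x - m) / (W + m) := by field_simp; ring
  linarith

/-- Expectation form of Corollary 1:
E[(1/2)·log det Π₀ − (1/2)·log det Π_T]
  ≤ T·(1/2)·log(1 + (1/(TW))·Σ_{t<T} E[z_tᵀ Π_t z_t]). -/
theorem expected_information_gain_capacity_bound
    {Ω : Type*} [MeasurableSpace Ω] (ℙ : Measure Ω) [IsProbabilityMeasure ℙ]
    (Pm0 : Matrix (Fin 2) (Fin 2) ℝ) (hPm0 : Pm0.PosDef)
    (W : ℝ) (hW : 0 < W) (T : ℕ) (hT : 1 ≤ T)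
    (z : ℕ → Ω → Fin 2 → ℝ) (hzmeas : ∀ t, Measurable (z t))
    (Pi : ℕ → Ω → Matrix (Fin 2) (Fin 2) ℝ)
    (hPimeas : ∀ t, Measurable (Pi t))
    (hPi0 : ∀ ω, Pi 0 ω = Pm0)
    (hrec : ∀ t, ∀ ω, Pi (t + 1) ω = covUpdate W (Pi t ω) (z t ω))
    (hint_pow : ∀ t < T, Integrable (fun ω => z t ω ⬝ᵥ (Pi t ω).mulVec (z t ω)) ℙ)
    (hint_log : Integrable (fun ω => Real.log (Pi T ω).det) ℙ) :
    ∫ ω, ((1 / 2) * Real.log Pm0.det - (1 / 2) * Real.log (Pi T ω).det) ∂ℙ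
      ≤ (T : ℝ) * ((1 / 2) * Real.log (1 + (1 / ((T : ℝ) * W)) *
          ∑ t ∈ Finset.range T, ∫ ω, z t ω ⬝ᵥ (Pi t ω).mulVec (z t ω) ∂ℙ)) := by
  -- notation
  set q : ℕ → Ω → ℝ := fun t ω => z t ω ⬝ᵥ (Pi t ω).mulVec (z t ω) with hqdef
  -- positive definiteness along the path
  have hPD : ∀ t, ∀ ω, (Pi t ω).PosDef := by
    intro t
    induction t with
    | zero => intro ω; rw [hPi0]; exact hPm0
    | succ n ih => intro ω; rw [hrec]; exact covUpdate_posDef W hW (ih ω) _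
  have hq0 : ∀ t ω, 0 ≤ q t ω := fun t ω => quad_nonneg' (hPD t ω) _
  -- pathwise log-det recursion
  have hlogstep : ∀ t ω, Real.log (Pi (t + 1) ω).det =
      Real.log (Pi t ω).det - Real.log (1 + q t ω / W) := by
    intro t ω
    have hq0' := hq0 t ω
    have hcpos : (0 : ℝ) < W + q t ω := by linarith
    have hdpos := (hPD t ω).det_pos
    rw [hrec, covUpdate_det _ _ _ hcpos.ne']
    have e1 : (1 : ℝ) + q t ω / W = (W + q t ω) / W := by field_simp
    rw [e1, Real.log_div hcpos.ne' hW.ne',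
      Real.log_div (by positivity) hcpos.ne', Real.log_mul hdpos.ne' hW.ne']
    ring
  -- telescoped pathwise identity
  have hpath : ∀ n ω, Real.log (Pi n ω).det =
      Real.log Pm0.det - ∑ t ∈ Finset.range n, Real.log (1 + q t ω / W) := by
    intro n
    induction n with
    | zero => intro ω; simp [hPi0]
    | succ n ih =>
        intro ω
        rw [hlogstep, ih, Finset.sum_range_succ]
        ring
  -- measurability of q t
  have hqmeas : ∀ t, Measurable (q t) := by
    intro t
    have hz : ∀ i, Measurable fun ω => z t ω i := fun i => (measurable_pi_apply i).comp (hzmeas t)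
    have hP : ∀ i j, Measurable fun ω => Pi t ω i j := fun i j =>
      (measurable_pi_apply j).comp ((measurable_pi_apply i).comp (hPimeas t))
    simp only [hqdef, dotProduct, mulVec, Fin.sum_univ_two]
    fun_prop
  -- integrability of the log-gain terms
  have hgint : ∀ t < T, Integrable (fun ω => Real.log (1 + q t ω / W)) ℙ := by
    intro t ht
    refine Integrable.mono ((hint_pow t ht).div_const W)
      ((Real.measurable_log.comp
        (measurable_const.add ((hqmeas t).div_const W))).aestronglyMeasurable)
      (Filter.Eventually.of_forall fun ω => ?_)
    have hq0' := hq0 t ω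
    have h0 : 0 ≤ Real.log (1 + q t ω / W) := by
      apply Real.log_nonneg
      have : 0 ≤ q t ω / W := by positivity
      linarith
    have h1 : Real.log (1 + q t ω / W) ≤ q t ω / W := by
      have := Real.log_le_sub_one_of_pos (show (0:ℝ) < 1 + q t ω / W by
        have : 0 ≤ q t ω / W := by positivity
        linarith)
      linarith
    rw [Real.norm_eq_abs, Real.norm_eq_abs, abs_of_nonneg h0, abs_of_nonneg (by positivity)]
    exact h1
  -- the LHS equals the sum of expected log-gains, halved
  have hLHS : ∫ ω, ((1 / 2) * Real.log Pm0.det - (1 / 2) * Real.log (Pi T ω).det) ∂ℙ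
      = ∑ t ∈ Finset.range T, ∫ ω, (1 / 2) * Real.log (1 + q t ω / W) ∂ℙ := by
    rw [← integral_finset_sum]
    · apply integral_congr_ae
      filter_upwards with ω
      rw [hpath T ω, ← Finset.mul_sum]
      ring
    · exact fun t ht => ((hgint t (Finset.mem_range.1 ht)).const_mul _)
  -- per-time Jensen step
  set m : ℕ → ℝ := fun t => ∫ ω, q t ω ∂ℙ with hmdef
  have hm0 : ∀ t, 0 ≤ m t := fun t => integral_nonneg (hq0 t)
  have hJ : ∀ t < T, ∫ ω, Real.log (1 + q t ω / W) ∂ℙ ≤ Real.log (1 + m t / W) := by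
    intro t ht
    have hWm : (0:ℝ) < W + m t := by have := hm0 t; linarith
    have hbd : ∀ ω, Real.log (1 + q t ω / W)
        ≤ Real.log (1 + m t / W) + (q t ω - m t) / (W + m t) :=
      fun ω => log_tangent hW (hm0 t) (hq0 t ω)
    have hqi : Integrable (fun ω => q t ω) ℙ := hint_pow t ht
    have h2int : Integrable (fun ω => (q t ω - m t) / (W + m t)) ℙ := by
      exact (hqi.sub (integrable_const _)).div_const _
    have hrint : Integrable (fun ω => Real.log (1 + m t / W) + (q t ω - m t) / (W + m t)) ℙ := by
      exact (integrable_const _).add h2int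
    calc ∫ ω, Real.log (1 + q t ω / W) ∂ℙ
        ≤ ∫ ω, (Real.log (1 + m t / W) + (q t ω - m t) / (W + m t)) ∂ℙ :=
          integral_mono (hgint t ht) hrint hbd
      _ = Real.log (1 + m t / W) := by
          rw [integral_add (integrable_const _) h2int, integral_div,
            integral_sub hqi (integrable_const _)]
          simp only [integral_const, Measure.real, measure_univ, ENNReal.toReal_one, smul_eq_mul, one_mul]
          show Real.log (1 + m t / W) + (m t - m t) / (W + m t) = _
          simp
  -- time-averaging step
  set S : ℝ := ∑ t ∈ Finset.range T, m t with hSdef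
  have hS0 : 0 ≤ S := Finset.sum_nonneg fun t _ => hm0 t
  have hTpos : (0:ℝ) < T := by exact_mod_cast hT
  set M : ℝ := S / T with hMdef
  have hM0 : 0 ≤ M := by positivity
  have hsum : ∑ t ∈ Finset.range T, Real.log (1 + m t / W) ≤ T * Real.log (1 + M / W) := by
    calc ∑ t ∈ Finset.range T, Real.log (1 + m t / W)
        ≤ ∑ t ∈ Finset.range T, (Real.log (1 + M / W) + (m t - M) / (W + M)) :=
          Finset.sum_le_sum fun t _ => log_tangent hW hM0 (hm0 t)
      _ = T * Real.log (1 + M / W) + (S - T * M) / (W + M) := by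
          rw [Finset.sum_add_distrib, Finset.sum_const, Finset.card_range]
          rw [← Finset.sum_div, Finset.sum_sub_distrib, Finset.sum_const, Finset.card_range]
          push_cast
          ring
      _ = T * Real.log (1 + M / W) := by
          have : S - T * M = 0 := by rw [hMdef]; field_simp; ring
          rw [this]; simp
  -- assemble
  have hRW : 1 + 1 / ((T:ℝ) * W) * S = 1 + M / W := by
    rw [hMdef]; field_simp
  rw [hLHS]
  have step1 : ∑ t ∈ Finset.range T, ∫ ω, (1 / 2) * Real.log (1 + q t ω / W) ∂ℙ
      ≤ ∑ t ∈ Finset.range T, (1 / 2) * Real.log (1 + m t / W) := by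
    apply Finset.sum_le_sum
    intro t ht
    rw [integral_const_mul]
    have := hJ t (Finset.mem_range.1 ht)
    linarith
  calc ∑ t ∈ Finset.range T, ∫ ω, (1 / 2) * Real.log (1 + q t ω / W) ∂ℙ
      ≤ ∑ t ∈ Finset.range T, (1 / 2) * Real.log (1 + m t / W) := step1
    _ = (1 / 2) * ∑ t ∈ Finset.range T, Real.log (1 + m t / W) := by rw [Finset.mul_sum]
    _ ≤ (1 / 2) * ((T:ℝ) * Real.log (1 + M / W)) := by linarith [hsum]
    _ = (T:ℝ) * ((1 / 2) * Real.log (1 + 1 / ((T:ℝ) * W) * S)) := by rw [hRW]; ring
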